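/- For every signed permutation π of size n, all positive weights w_ρ and w_τ, and every rearrangement model M ∈ {M1, M2, M3, M4, M5, M6}, the weighted sorting distance satisfies d^w_M(π) ≥ min{w_ρ/2, w_τ/3} · b(π). -/

import Mathlib

/-- The four kinds of rearrangement operations considered:
reversals, transpositions, inverse transpositions and revrevs. -/
inductive RearrOp : Type
  | rev
  | transp
  | invtransp
  | revrev
deriving DecidableEq

/-- `π` is (the extended version of) a signed permutation of size `n`:
`π 0 = +0`, `π (n+1) = +(n+1)`, and on positions `1, …, n` the values have pairwise
distinct absolute values lying in `{1, …, n}`. -/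
def IsSPerm (n : ℕ) (π : ℕ → ℤ) : Prop :=
  π 0 = 0 ∧ π (n + 1) = (n : ℤ) + 1 ∧
  (∀ i : ℕ, 1 ≤ i → i ≤ n → 1 ≤ |π i| ∧ |π i| ≤ (n : ℤ)) ∧
  (∀ i j : ℕ, 1 ≤ i → i ≤ n → 1 ≤ j → j ≤ n → |π i| = |π j| → i = j)

/-- `π` is (the extended version of) an unsigned permutation of size `n`. -/
def IsUPerm (n : ℕ) (π : ℕ → ℕ) : Prop :=
  π 0 = 0 ∧ π (n + 1) = n + 1 ∧
  (∀ i : ℕ, 1 ≤ i → i ≤ n → 1 ≤ π i ∧ π i ≤ n) ∧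
  (∀ i j : ℕ, 1 ≤ i → i ≤ n → 1 ≤ j → j ≤ n → π i = π j → i = j)

/-- Signed reversal `ρ(i,j)`, `1 ≤ i ≤ j ≤ n`: replaces `(π_i … π_j)` by `(−π_j … −π_i)`. -/
def SRev (n : ℕ) (π π' : ℕ → ℤ) : Prop :=
  ∃ i j : ℕ, 1 ≤ i ∧ i ≤ j ∧ j ≤ n ∧
    (∀ p : ℕ, i ≤ p → p ≤ j → π' p = - π (i + j - p)) ∧
    (∀ p : ℕ, p < i ∨ j < p → π' p = π p)

/-- Transposition `τ(i,j,k)`, `1 ≤ i < j < k ≤ n+1`: exchanges the adjacent segments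
`(π_i … π_{j−1})` and `(π_j … π_{k−1})`. -/
def STransp (n : ℕ) (π π' : ℕ → ℤ) : Prop :=
  ∃ i j k : ℕ, 1 ≤ i ∧ i < j ∧ j < k ∧ k ≤ n + 1 ∧
    (∀ p : ℕ, i ≤ p → p < i + (k - j) → π' p = π (p + (j - i))) ∧
    (∀ p : ℕ, i + (k - j) ≤ p → p < k → π' p = π (p - (k - j))) ∧
    (∀ p : ℕ, p < i ∨ k ≤ p → π' p = π p)

/-- Signed inverse transposition (type 1 or type 2): exchanges the two adjacent segments
`(π_i … π_{j−1})` and `(π_j … π_{k−1})` and additionally reverses (and negates) one of them. -/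
def SInvTransp (n : ℕ) (π π' : ℕ → ℤ) : Prop :=
  ∃ i j k : ℕ, 1 ≤ i ∧ i < j ∧ j < k ∧ k ≤ n + 1 ∧
    (((∀ p : ℕ, i ≤ p → p < i + (k - j) → π' p = π (p + (j - i))) ∧
      (∀ p : ℕ, i + (k - j) ≤ p → p < k → π' p = - π (i + k - 1 - p))) ∨
     ((∀ p : ℕ, i ≤ p → p < i + (k - j) → π' p = - π (i + k - 1 - p)) ∧
      (∀ p : ℕ, i + (k - j) ≤ p → p < k → π' p = π (p - (k - j))))) ∧
    (∀ p : ℕ, p < i ∨ k ≤ p → π' p = π p)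

/-- Signed revrev `ρρ(i,j,k)`: reverses (and negates) each of the two adjacent segments
`(π_i … π_{j−1})` and `(π_j … π_{k−1})` in place, without exchanging them. -/
def SRevRev (n : ℕ) (π π' : ℕ → ℤ) : Prop :=
  ∃ i j k : ℕ, 1 ≤ i ∧ i < j ∧ j < k ∧ k ≤ n + 1 ∧
    (∀ p : ℕ, i ≤ p → p < j → π' p = - π (i + j - 1 - p)) ∧
    (∀ p : ℕ, j ≤ p → p < k → π' p = - π (j + k - 1 - p)) ∧
    (∀ p : ℕ, p < i ∨ k ≤ p → π' p = π p)

/-- Unsigned reversal `ρ(i,j)`. -/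
def URev (n : ℕ) (π π' : ℕ → ℕ) : Prop :=
  ∃ i j : ℕ, 1 ≤ i ∧ i ≤ j ∧ j ≤ n ∧
    (∀ p : ℕ, i ≤ p → p ≤ j → π' p = π (i + j - p)) ∧
    (∀ p : ℕ, p < i ∨ j < p → π' p = π p)

/-- Unsigned transposition `τ(i,j,k)`. -/
def UTransp (n : ℕ) (π π' : ℕ → ℕ) : Prop :=
  ∃ i j k : ℕ, 1 ≤ i ∧ i < j ∧ j < k ∧ k ≤ n + 1 ∧
    (∀ p : ℕ, i ≤ p → p < i + (k - j) → π' p = π (p + (j - i))) ∧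
    (∀ p : ℕ, i + (k - j) ≤ p → p < k → π' p = π (p - (k - j))) ∧
    (∀ p : ℕ, p < i ∨ k ≤ p → π' p = π p)

/-- Unsigned inverse transposition (type 1 or type 2). -/
def UInvTransp (n : ℕ) (π π' : ℕ → ℕ) : Prop :=
  ∃ i j k : ℕ, 1 ≤ i ∧ i < j ∧ j < k ∧ k ≤ n + 1 ∧
    (((∀ p : ℕ, i ≤ p → p < i + (k - j) → π' p = π (p + (j - i))) ∧
      (∀ p : ℕ, i + (k - j) ≤ p → p < k → π' p = π (i + k - 1 - p))) ∨
     ((∀ p : ℕ, i ≤ p → p < i + (k - j) → π' p = π (i + k - 1 - p)) ∧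
      (∀ p : ℕ, i + (k - j) ≤ p → p < k → π' p = π (p - (k - j))))) ∧
    (∀ p : ℕ, p < i ∨ k ≤ p → π' p = π p)

/-- Unsigned revrev `ρρ(i,j,k)`. -/
def URevRev (n : ℕ) (π π' : ℕ → ℕ) : Prop :=
  ∃ i j k : ℕ, 1 ≤ i ∧ i < j ∧ j < k ∧ k ≤ n + 1 ∧
    (∀ p : ℕ, i ≤ p → p < j → π' p = π (i + j - 1 - p)) ∧
    (∀ p : ℕ, j ≤ p → p < k → π' p = π (j + k - 1 - p)) ∧
    (∀ p : ℕ, p < i ∨ k ≤ p → π' p = π p)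

def sOpRel (n : ℕ) : RearrOp → (ℕ → ℤ) → (ℕ → ℤ) → Prop
  | RearrOp.rev => SRev n
  | RearrOp.transp => STransp n
  | RearrOp.invtransp => SInvTransp n
  | RearrOp.revrev => SRevRev n

def uOpRel (n : ℕ) : RearrOp → (ℕ → ℕ) → (ℕ → ℕ) → Prop
  | RearrOp.rev => URev n
  | RearrOp.transp => UTransp n
  | RearrOp.invtransp => UInvTransp n
  | RearrOp.revrev => URevRev n

/-- The list of operations `l` transforms the signed permutation `π` into the identity. -/
def SSorts (n : ℕ) : List RearrOp → (ℕ → ℤ) → Prop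
  | [], π => ∀ p : ℕ, p ≤ n + 1 → π p = (p : ℤ)
  | op :: l, π => ∃ π' : ℕ → ℤ, sOpRel n op π π' ∧ SSorts n l π'

/-- The list of operations `l` transforms the unsigned permutation `π` into the identity. -/
def USorts (n : ℕ) : List RearrOp → (ℕ → ℕ) → Prop
  | [], π => ∀ p : ℕ, p ≤ n + 1 → π p = p
  | op :: l, π => ∃ π' : ℕ → ℕ, uOpRel n op π π' ∧ USorts n l π'

/-- A sequence of `s` (unsigned) transpositions transforms `π` into the identity. -/
def UTranspSorts (n : ℕ) : ℕ → (ℕ → ℕ) → Prop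
  | 0, π => ∀ p : ℕ, p ≤ n + 1 → π p = p
  | s + 1, π => ∃ π' : ℕ → ℕ, UTransp n π π' ∧ UTranspSorts n s π'

/-- The cost of an operation: `wr` for a reversal, `wt` for a transposition,
inverse transposition or revrev. -/
noncomputable def opCost (wr wt : ℝ) (op : RearrOp) : ENNReal :=
  if op = RearrOp.rev then ENNReal.ofReal wr else ENNReal.ofReal wt

/-- The total cost of a sequence of operations. -/
noncomputable def seqCost (wr wt : ℝ) (l : List RearrOp) : ENNReal :=
  (l.map (opCost wr wt)).sum

/-- The weighted distance `d^w_M(π)` for a signed permutation `π`: the minimum total cost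
of a sequence of operations from the model `M` transforming `π` into the identity
(`∞` if no such sequence exists). -/
noncomputable def sWDist (n : ℕ) (M : Set RearrOp) (wr wt : ℝ) (π : ℕ → ℤ) : ENNReal :=
  sInf {c : ENNReal |
    ∃ l : List RearrOp, (∀ op ∈ l, op ∈ M) ∧ SSorts n l π ∧ c = seqCost wr wt l}

/-- The weighted distance `d^w_M(π)` for an unsigned permutation `π`. -/
noncomputable def uWDist (n : ℕ) (M : Set RearrOp) (wr wt : ℝ) (π : ℕ → ℕ) : ENNReal :=
  sInf {c : ENNReal |
    ∃ l : List RearrOp, (∀ op ∈ l, op ∈ M) ∧ USorts n l π ∧ c = seqCost wr wt l}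

/-- `b(π)`: number of (signed) breakpoints of the signed permutation `π`. -/
def bS (n : ℕ) (π : ℕ → ℤ) : ℕ :=
  ((Finset.range (n + 1)).filter (fun i => π (i + 1) - π i ≠ 1)).card

/-- `b(π)`: number of unsigned-reversal breakpoints, i.e. pairs with `|π_{i+1} − π_i| ≠ 1`. -/
def bU (n : ℕ) (π : ℕ → ℕ) : ℕ :=
  ((Finset.range (n + 1)).filter
    (fun i => ¬ (π (i + 1) = π i + 1 ∨ π i = π (i + 1) + 1))).card

/-- `b_τ(π)`: number of transposition breakpoints, i.e. pairs with `π_{i+1} − π_i ≠ 1`. -/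
def bTU (n : ℕ) (π : ℕ → ℕ) : ℕ :=
  ((Finset.range (n + 1)).filter (fun i => π (i + 1) ≠ π i + 1)).card

def M1 : Set RearrOp := {RearrOp.transp, RearrOp.invtransp}
def M2 : Set RearrOp := {RearrOp.rev, RearrOp.transp, RearrOp.invtransp}
def M3 : Set RearrOp := {RearrOp.transp, RearrOp.revrev}
def M4 : Set RearrOp := {RearrOp.rev, RearrOp.transp, RearrOp.revrev}
def M5 : Set RearrOp := {RearrOp.transp, RearrOp.invtransp, RearrOp.revrev}
def M6 : Set RearrOp := {RearrOp.rev, RearrOp.transp, RearrOp.invtransp, RearrOp.revrev}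


section Aux

private lemma bound_step (n m : ℕ) (π π' : ℕ → ℤ) (E : Finset ℕ) (hE : E.card ≤ m)
    (h : ℕ → ℕ)
    (hmap : ∀ q, q ≤ n → q ∉ E → h q ≤ n ∧ π' (h q + 1) - π' (h q) = π (q + 1) - π q)
    (hinj : ∀ a, a ≤ n → a ∉ E → ∀ b, b ≤ n → b ∉ E → h a = h b → a = b) :
    bS n π ≤ bS n π' + m := by
  classical
  unfold bS
  set A := (Finset.range (n + 1)).filter (fun q => π (q + 1) - π q ≠ 1) with hA
  set B := (Finset.range (n + 1)).filter (fun q => π' (q + 1) - π' q ≠ 1) with hB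
  have h1 : A.card ≤ (A \ E).card + E.card := Finset.card_le_card_sdiff_add_card
  have h2 : (A \ E).card ≤ B.card := by
    apply Finset.card_le_card_of_injOn h
    · intro q hq
      rw [Finset.mem_coe, Finset.mem_sdiff, hA, Finset.mem_filter, Finset.mem_range] at hq
      obtain ⟨⟨hq1, hq2⟩, hq3⟩ := hq
      obtain ⟨hle, heq⟩ := hmap q (by omega) hq3
      rw [Finset.mem_coe, hB, Finset.mem_filter, Finset.mem_range]
      exact ⟨by omega, by rw [heq]; exact hq2⟩
    · intro a ha b hb hab
      rw [Finset.mem_coe, Finset.mem_sdiff, hA, Finset.mem_filter, Finset.mem_range] at ha hb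
      exact hinj a (by omega) ha.2 b (by omega) hb.2 hab
  omega

private lemma card3 (a b c : ℕ) : ({a, b, c} : Finset ℕ).card ≤ 3 := by
  calc ({a, b, c} : Finset ℕ).card ≤ ({b, c} : Finset ℕ).card + 1 := Finset.card_insert_le _ _
    _ ≤ (({c} : Finset ℕ).card + 1) + 1 := by gcongr; exact Finset.card_insert_le _ _
    _ ≤ 3 := by simp

private lemma srev_bS {n : ℕ} {π π' : ℕ → ℤ} (hop : SRev n π π') : bS n π ≤ bS n π' + 2 := by
  obtain ⟨i, j, hi, hij, hjn, hA, hC⟩ := hop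
  refine bound_step n 2 π π' {i - 1, j} ?_
    (fun q => if i ≤ q ∧ q < j then i + j - 1 - q else q) ?_ ?_
  · calc ({i - 1, j} : Finset ℕ).card ≤ ({j} : Finset ℕ).card + 1 := Finset.card_insert_le _ _
      _ ≤ 2 := by simp
  · intro q hq hqE
    simp only [Finset.mem_insert, Finset.mem_singleton] at hqE
    push_neg at hqE
    by_cases c1 : i ≤ q ∧ q < j
    · simp only [if_pos c1]
      refine ⟨by omega, ?_⟩
      rw [hA (i + j - 1 - q + 1) (by omega) (by omega), hA (i + j - 1 - q) (by omega) (by omega),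
        show i + j - (i + j - 1 - q + 1) = q from by omega,
        show i + j - (i + j - 1 - q) = q + 1 from by omega]
      ring
    · simp only [if_neg c1]
      refine ⟨hq, ?_⟩
      rw [hC q (by omega), hC (q + 1) (by omega)]
  · intro a ha haE b hb hbE hab
    simp only [Finset.mem_insert, Finset.mem_singleton] at haE hbE
    split_ifs at hab <;> omega

private lemma stransp_bS {n : ℕ} {π π' : ℕ → ℤ} (hop : STransp n π π') :
    bS n π ≤ bS n π' + 3 := by
  obtain ⟨i, j, k, hi, hij, hjk, hk, hA, hB, hC⟩ := hop
  refine bound_step n 3 π π' {i - 1, j - 1, k - 1} (card3 _ _ _)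
    (fun q => if i ≤ q ∧ q + 1 < j then q + (k - j)
      else if j ≤ q ∧ q + 1 < k then q - (j - i) else q) ?_ ?_
  · intro q hq hqE
    simp only [Finset.mem_insert, Finset.mem_singleton] at hqE
    push_neg at hqE
    by_cases c1 : i ≤ q ∧ q + 1 < j
    · simp only [if_pos c1]
      refine ⟨by omega, ?_⟩
      rw [hB (q + (k - j) + 1) (by omega) (by omega), hB (q + (k - j)) (by omega) (by omega),
        show q + (k - j) + 1 - (k - j) = q + 1 from by omega,
        show q + (k - j) - (k - j) = q from by omega]
    · by_cases c2 : j ≤ q ∧ q + 1 < k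
      · simp only [if_neg c1, if_pos c2]
        refine ⟨by omega, ?_⟩
        rw [hA (q - (j - i) + 1) (by omega) (by omega), hA (q - (j - i)) (by omega) (by omega),
          show q - (j - i) + 1 + (j - i) = q + 1 from by omega,
          show q - (j - i) + (j - i) = q from by omega]
      · simp only [if_neg c1, if_neg c2]
        refine ⟨hq, ?_⟩
        rw [hC q (by omega), hC (q + 1) (by omega)]
  · intro a ha haE b hb hbE hab
    simp only [Finset.mem_insert, Finset.mem_singleton] at haE hbE
    split_ifs at hab <;> omega

private lemma sinvtransp_bS {n : ℕ} {π π' : ℕ → ℤ} (hop : SInvTransp n π π') :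
    bS n π ≤ bS n π' + 3 := by
  obtain ⟨i, j, k, hi, hij, hjk, hk, hAB, hC⟩ := hop
  rcases hAB with ⟨hA, hB⟩ | ⟨hA, hB⟩
  · refine bound_step n 3 π π' {i - 1, j - 1, k - 1} (card3 _ _ _)
      (fun q => if i ≤ q ∧ q + 1 < j then i + k - 2 - q
        else if j ≤ q ∧ q + 1 < k then q - (j - i) else q) ?_ ?_
    · intro q hq hqE
      simp only [Finset.mem_insert, Finset.mem_singleton] at hqE
      push_neg at hqE
      by_cases c1 : i ≤ q ∧ q + 1 < j
      · simp only [if_pos c1]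
        refine ⟨by omega, ?_⟩
        rw [hB (i + k - 2 - q + 1) (by omega) (by omega), hB (i + k - 2 - q) (by omega) (by omega),
          show i + k - 1 - (i + k - 2 - q + 1) = q from by omega,
          show i + k - 1 - (i + k - 2 - q) = q + 1 from by omega]
        ring
      · by_cases c2 : j ≤ q ∧ q + 1 < k
        · simp only [if_neg c1, if_pos c2]
          refine ⟨by omega, ?_⟩
          rw [hA (q - (j - i) + 1) (by omega) (by omega), hA (q - (j - i)) (by omega) (by omega),
            show q - (j - i) + 1 + (j - i) = q + 1 from by omega,
            show q - (j - i) + (j - i) = q from by omega]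
        · simp only [if_neg c1, if_neg c2]
          refine ⟨hq, ?_⟩
          rw [hC q (by omega), hC (q + 1) (by omega)]
    · intro a ha haE b hb hbE hab
      simp only [Finset.mem_insert, Finset.mem_singleton] at haE hbE
      split_ifs at hab <;> omega
  · refine bound_step n 3 π π' {i - 1, j - 1, k - 1} (card3 _ _ _)
      (fun q => if i ≤ q ∧ q + 1 < j then q + (k - j)
        else if j ≤ q ∧ q + 1 < k then i + k - 2 - q else q) ?_ ?_
    · intro q hq hqE
      simp only [Finset.mem_insert, Finset.mem_singleton] at hqE
      push_neg at hqE
      by_cases c1 : i ≤ q ∧ q + 1 < j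
      · simp only [if_pos c1]
        refine ⟨by omega, ?_⟩
        rw [hB (q + (k - j) + 1) (by omega) (by omega), hB (q + (k - j)) (by omega) (by omega),
          show q + (k - j) + 1 - (k - j) = q + 1 from by omega,
          show q + (k - j) - (k - j) = q from by omega]
      · by_cases c2 : j ≤ q ∧ q + 1 < k
        · simp only [if_neg c1, if_pos c2]
          refine ⟨by omega, ?_⟩
          rw [hA (i + k - 2 - q + 1) (by omega) (by omega),
            hA (i + k - 2 - q) (by omega) (by omega),
            show i + k - 1 - (i + k - 2 - q + 1) = q from by omega,
            show i + k - 1 - (i + k - 2 - q) = q + 1 from by omega]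
          ring
        · simp only [if_neg c1, if_neg c2]
          refine ⟨hq, ?_⟩
          rw [hC q (by omega), hC (q + 1) (by omega)]
    · intro a ha haE b hb hbE hab
      simp only [Finset.mem_insert, Finset.mem_singleton] at haE hbE
      split_ifs at hab <;> omega

private lemma srevrev_bS {n : ℕ} {π π' : ℕ → ℤ} (hop : SRevRev n π π') :
    bS n π ≤ bS n π' + 3 := by
  obtain ⟨i, j, k, hi, hij, hjk, hk, hA, hB, hC⟩ := hop
  refine bound_step n 3 π π' {i - 1, j - 1, k - 1} (card3 _ _ _)
    (fun q => if i ≤ q ∧ q + 1 < j then i + j - 2 - q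
      else if j ≤ q ∧ q + 1 < k then j + k - 2 - q else q) ?_ ?_
  · intro q hq hqE
    simp only [Finset.mem_insert, Finset.mem_singleton] at hqE
    push_neg at hqE
    by_cases c1 : i ≤ q ∧ q + 1 < j
    · simp only [if_pos c1]
      refine ⟨by omega, ?_⟩
      rw [hA (i + j - 2 - q + 1) (by omega) (by omega), hA (i + j - 2 - q) (by omega) (by omega),
        show i + j - 1 - (i + j - 2 - q + 1) = q from by omega,
        show i + j - 1 - (i + j - 2 - q) = q + 1 from by omega]
      ring
    · by_cases c2 : j ≤ q ∧ q + 1 < k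
      · simp only [if_neg c1, if_pos c2]
        refine ⟨by omega, ?_⟩
        rw [hB (j + k - 2 - q + 1) (by omega) (by omega), hB (j + k - 2 - q) (by omega) (by omega),
          show j + k - 1 - (j + k - 2 - q + 1) = q from by omega,
          show j + k - 1 - (j + k - 2 - q) = q + 1 from by omega]
        ring
      · simp only [if_neg c1, if_neg c2]
        refine ⟨hq, ?_⟩
        rw [hC q (by omega), hC (q + 1) (by omega)]
  · intro a ha haE b hb hbE hab
    simp only [Finset.mem_insert, Finset.mem_singleton] at haE hbE
    split_ifs at hab <;> omega

private lemma cost_helper (x w : ℝ) (m : ℕ) (hm : 0 < m) (hw : 0 ≤ w) (hx : x ≤ w / m) :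
    ENNReal.ofReal x * m ≤ ENNReal.ofReal w := by
  calc ENNReal.ofReal x * m ≤ ENNReal.ofReal (w / m) * m :=
        mul_le_mul_left (ENNReal.ofReal_le_ofReal hx) _
    _ = ENNReal.ofReal (w / m * m) := by
        rw [ENNReal.ofReal_mul (div_nonneg hw (Nat.cast_nonneg m)), ENNReal.ofReal_natCast]
    _ = ENNReal.ofReal w := by
        congr 1
        field_simp

private lemma sorts_cost_bound (n : ℕ) (wr wt : ℝ) (hwr : 0 < wr) (hwt : 0 < wt) :
    ∀ (l : List RearrOp) (π : ℕ → ℤ), SSorts n l π →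
      ENNReal.ofReal (min (wr / 2) (wt / 3)) * (bS n π : ENNReal) ≤ seqCost wr wt l := by
  intro l
  induction l with
  | nil =>
    intro π hs
    have hb : bS n π = 0 := by
      unfold bS
      rw [Finset.card_eq_zero, Finset.filter_eq_empty_iff]
      intro q hq
      rw [Finset.mem_range] at hq
      rw [hs (q + 1) (by omega), hs q (by omega)]
      push_cast
      simp
    simp [hb, seqCost]
  | cons op l ih =>
    intro π hs
    obtain ⟨π', hop, hs'⟩ := hs
    have hcost : seqCost wr wt (op :: l) = opCost wr wt op + seqCost wr wt l := by
      simp [seqCost]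
    set c := ENNReal.ofReal (min (wr / 2) (wt / 3)) with hc
    have hmin2 : min (wr / 2) (wt / 3) ≤ wr / (2 : ℕ) := by
      push_cast; exact min_le_left _ _
    have hmin3 : min (wr / 2) (wt / 3) ≤ wt / (3 : ℕ) := by
      push_cast; exact min_le_right _ _
    have key : ∀ m : ℕ, bS n π ≤ bS n π' + m → c * m ≤ opCost wr wt op →
        c * (bS n π : ENNReal) ≤ seqCost wr wt (op :: l) := by
      intro m hbm hcm
      calc c * (bS n π : ENNReal) ≤ c * ((bS n π' : ENNReal) + m) := by
            apply mul_le_mul_right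
            have : ((bS n π : ℕ) : ENNReal) ≤ ((bS n π' + m : ℕ) : ENNReal) := by
              exact_mod_cast Nat.cast_le.mpr hbm
            push_cast at this
            exact this
        _ = c * (bS n π' : ENNReal) + c * m := by ring
        _ ≤ seqCost wr wt l + opCost wr wt op := add_le_add (ih π' hs') hcm
        _ = seqCost wr wt (op :: l) := by rw [hcost, add_comm]
    cases op with
    | rev =>
      refine key 2 (srev_bS hop) ?_
      simpa [opCost, hc] using cost_helper _ wr 2 (by norm_num) hwr.le hmin2
    | transp =>
      refine key 3 (stransp_bS hop) ?_
      simpa [opCost, hc] using cost_helper _ wt 3 (by norm_num) hwt.le hmin3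
    | invtransp =>
      refine key 3 (sinvtransp_bS hop) ?_
      simpa [opCost, hc] using cost_helper _ wt 3 (by norm_num) hwt.le hmin3
    | revrev =>
      refine key 3 (srevrev_bS hop) ?_
      simpa [opCost, hc] using cost_helper _ wt 3 (by norm_num) hwt.le hmin3

end Aux

/-- For every signed permutation `π` of size `n`, all positive weights
`w_ρ` and `w_τ`, and every rearrangement model `M ∈ {M1, …, M6}`, the weighted sorting
distance satisfies `d^w_M(π) ≥ min{w_ρ/2, w_τ/3} · b(π)`. -/
theorem weighted_signed_breakpoint_lower_bound
    (n : ℕ) (π : ℕ → ℤ) (hπ : IsSPerm n π)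
    (wr wt : ℝ) (hwr : 0 < wr) (hwt : 0 < wt)
    (M : Set RearrOp)
    (hM : M = M1 ∨ M = M2 ∨ M = M3 ∨ M = M4 ∨ M = M5 ∨ M = M6) :
    ENNReal.ofReal (min (wr / 2) (wt / 3) * (bS n π : ℝ)) ≤ sWDist n M wr wt π := by
  have hmin : 0 ≤ min (wr / 2) (wt / 3) := le_min (by positivity) (by positivity)
  rw [ENNReal.ofReal_mul hmin, ENNReal.ofReal_natCast]
  apply le_sInf
  rintro c' ⟨l, hmem, hsort, rfl⟩
  exact sorts_cost_bound n wr wt hwr hwt l π hsort
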